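/- Let η ∈ ℂ with |η| < 1, κ = Im(η) ∈ (-1,1), ρ = √(1-|η|²), and e^{iφ} = κ + i√(1-κ²). Let C = [[-η, ρ],[ρ, conj(η)]]. Define p = (1 - Re(η)/√(1-κ²))/2 and q = (1 + Re(η)/√(1-κ²))/2. Then the vector (√p, √q)ᵀ is a unit eigenvector of C with eigenvalue -i e^{iφ}. -/

import Mathlib

open Complex

set_option maxHeartbeats 1000000 in
/-- (√p, √q)ᵀ is a unit eigenvector of the coin matrix with eigenvalue -i e^{iφ}. -/
theorem stmt_5 (η : ℂ) (hη : ‖η‖ < 1)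
    (κ : ℝ) (hκdef : κ = η.im) (hκ : κ ∈ Set.Ioo (-1:ℝ) 1)
    (ρ : ℝ) (hρ : ρ = Real.sqrt (1 - ‖η‖ ^ 2))
    (eiφ : ℂ) (heiφ : eiφ = (κ:ℂ) + I * (Real.sqrt (1 - κ^2) : ℝ))
    (C : Matrix (Fin 2) (Fin 2) ℂ) (hC : C = !![-η, (ρ:ℂ); (ρ:ℂ), (starRingEnd ℂ) η])
    (p q : ℝ)
    (hp : p = (1 - η.re / Real.sqrt (1 - κ^2)) / 2)
    (hq : q = (1 + η.re / Real.sqrt (1 - κ^2)) / 2) :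
    C.mulVec ![(Real.sqrt p : ℂ), (Real.sqrt q : ℂ)]
      = (-I * eiφ) • ![(Real.sqrt p : ℂ), (Real.sqrt q : ℂ)] ∧
    Real.sqrt p ^ 2 + Real.sqrt q ^ 2 = 1 := by
  set s := Real.sqrt (1 - κ^2) with hsdef
  set a := η.re with hadef
  have hκ2 : κ^2 < 1 := by nlinarith [hκ.1, hκ.2]
  have hs2 : s^2 = 1 - κ^2 := Real.sq_sqrt (by linarith)
  have hs0 : 0 < s := Real.sqrt_pos.mpr (by linarith)
  have habs : a^2 + κ^2 = ‖η‖ ^ 2 := by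
    rw [Complex.sq_norm, Complex.normSq_apply, hκdef]; ring
  have habs1 : a^2 + κ^2 < 1 := by
    rw [habs]; nlinarith [norm_nonneg η]
  have has : a^2 < s^2 := by rw [hs2]; linarith
  have hsa1 : 0 < s - a := by nlinarith
  have hsa2 : 0 < s + a := by nlinarith
  have hρ0 : 0 ≤ ρ := hρ ▸ Real.sqrt_nonneg _
  have hρ2 : ρ^2 = 1 - a^2 - κ^2 := by
    rw [hρ, Real.sq_sqrt (by nlinarith)]; rw [← habs]; ring
  have hpval : p = (s - a) / (2*s) := by rw [hp]; field_simp
  have hqval : q = (s + a) / (2*s) := by rw [hq]; field_simp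
  have hp0 : 0 ≤ p := by rw [hpval]; positivity
  have hq0 : 0 ≤ q := by rw [hqval]; positivity
  have key1 : ρ * Real.sqrt q = (s + a) * Real.sqrt p := by
    rw [show ρ * Real.sqrt q = Real.sqrt (ρ^2 * q) by
          rw [Real.sqrt_mul (sq_nonneg _), Real.sqrt_sq hρ0],
        show (s + a) * Real.sqrt p = Real.sqrt ((s+a)^2 * p) by
          rw [Real.sqrt_mul (sq_nonneg _), Real.sqrt_sq hsa2.le]]
    congr 1
    rw [hρ2, hpval, hqval]; field_simp; linear_combination (-1) * hs2
  have key2 : ρ * Real.sqrt p = (s - a) * Real.sqrt q := by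
    rw [show ρ * Real.sqrt p = Real.sqrt (ρ^2 * p) by
          rw [Real.sqrt_mul (sq_nonneg _), Real.sqrt_sq hρ0],
        show (s - a) * Real.sqrt q = Real.sqrt ((s-a)^2 * q) by
          rw [Real.sqrt_mul (sq_nonneg _), Real.sqrt_sq hsa1.le]]
    congr 1
    rw [hρ2, hpval, hqval]; field_simp; linear_combination (-1) * hs2
  constructor
  · subst hC
    rw [heiφ]
    funext i
    fin_cases i <;>
      · simp only [Matrix.cons_mulVec, Matrix.cons_dotProduct, Matrix.dotProduct_of_isEmpty,
          Matrix.cons_val', Matrix.cons_val_zero, Matrix.cons_val_one, Matrix.head_cons,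
          Matrix.smul_cons, Matrix.smul_empty, smul_eq_mul, Matrix.empty_mulVec,
          Matrix.cons_val_fin_one, add_zero]
        apply Complex.ext <;>
          simp [Complex.ext_iff, hκdef] <;> nlinarith [key1, key2]
  · rw [Real.sq_sqrt hp0, Real.sq_sqrt hq0, hp, hq]; ring
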